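/- For 1<q<p and t>1, one has H_q(t)·[(p−q)t^p − p t^{p−q}] ≤ (p−q)H_p(t)H_q(t) − p H_p(t), where H_r(t) = r t^{r−1} − (r−1) t^r; equivalently (p−q)t^p − p t^{p−q} ≤ (p−q)H_p(t) − p H_p(t)/H_q(t) whenever H_q(t) > 0. -/

import Mathlib

open Real Set

/-- For `1 < q < p` and `t > 1`:
`H_q(t)·[(p-q)t^p - p t^(p-q)] ≤ (p-q)H_p(t)H_q(t) - p H_p(t)`, and equivalently,
whenever `H_q(t) > 0`, `(p-q)t^p - p t^(p-q) ≤ (p-q)H_p(t) - p H_p(t)/H_q(t)`. -/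
theorem Hq_mul_ineq (p q t : ℝ) (hq : 1 < q) (hpq : q < p) (ht : 1 < t) :
    (q * t ^ (q - 1) - (q - 1) * t ^ q) * ((p - q) * t ^ p - p * t ^ (p - q))
      ≤ (p - q) * (p * t ^ (p - 1) - (p - 1) * t ^ p) * (q * t ^ (q - 1) - (q - 1) * t ^ q)
        - p * (p * t ^ (p - 1) - (p - 1) * t ^ p) ∧
    (0 < q * t ^ (q - 1) - (q - 1) * t ^ q →
      (p - q) * t ^ p - p * t ^ (p - q)
        ≤ (p - q) * (p * t ^ (p - 1) - (p - 1) * t ^ p)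
          - p * (p * t ^ (p - 1) - (p - 1) * t ^ p) / (q * t ^ (q - 1) - (q - 1) * t ^ q)) := by
  have ht0 : (0:ℝ) < t := by linarith
  set a := t ^ (p - 1) with ha_def
  set b := t ^ (q - 1) with hb_def
  set c := t ^ (p - q) with hc_def
  have ha : 0 < a := Real.rpow_pos_of_pos ht0 _
  have hb : 0 < b := Real.rpow_pos_of_pos ht0 _
  have hc : c * b = a := by
    rw [hc_def, hb_def, ha_def, ← Real.rpow_add ht0]; ring_nf
  have htp : t ^ p = a * t := by
    rw [ha_def, ← Real.rpow_add_one ht0.ne', sub_add_cancel]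
  have htq : t ^ q = b * t := by
    rw [hb_def, ← Real.rpow_add_one ht0.ne', sub_add_cancel]
  -- H_q(t) ≤ 1 via weighted AM-GM
  have hq0 : 0 < q := by linarith
  have hHq1 : q * b - (q - 1) * (b * t) ≤ 1 := by
    have hw1 : (0:ℝ) ≤ (q - 1) / q := div_nonneg (by linarith) (by linarith)
    have hw2 : (0:ℝ) ≤ 1 / q := by positivity
    have hsum : (q - 1) / q + 1 / q = 1 := by field_simp; ring
    have hgm := Real.geom_mean_le_arith_mean2_weighted hw1 hw2
      (le_of_lt (Real.rpow_pos_of_pos ht0 q)) zero_le_one hsum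
    have heq : (t ^ q) ^ ((q - 1) / q) = b := by
      rw [hb_def, ← Real.rpow_mul ht0.le]
      congr 1; field_simp
    rw [heq, Real.one_rpow, mul_one, htq] at hgm
    -- hgm : b ≤ (q-1)/q * (b*t) + 1/q * 1
    have h1 := mul_le_mul_of_nonneg_left hgm (le_of_lt hq0)
    have h2 : q * ((q - 1) / q * (b * t) + 1 / q * 1) = (q - 1) * (b * t) + 1 := by
      field_simp
    rw [h2] at h1
    linarith
  rw [htp, htq]
  have key : (p - q) * (p * a - (p - 1) * (a * t)) * (q * b - (q - 1) * (b * t))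
        - p * (p * a - (p - 1) * (a * t))
        - (q * b - (q - 1) * (b * t)) * ((p - q) * (a * t) - p * c)
      = p * (p - q) * a * (t - 1) * (1 - (q * b - (q - 1) * (b * t))) := by
    linear_combination (p * (q - (q - 1) * t)) * hc
  have hnn : 0 ≤ p * (p - q) * a * (t - 1) * (1 - (q * b - (q - 1) * (b * t))) := by
    apply mul_nonneg
    · apply mul_nonneg
      · apply mul_nonneg
        · apply mul_nonneg <;> nlinarith
        · linarith
      · linarith
    · linarith
  constructor
  · nlinarith [key, hnn]
  · intro hHq
    have h2 : (p - q) * (a * t) - p * c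
        ≤ ((p - q) * (p * a - (p - 1) * (a * t)) * (q * b - (q - 1) * (b * t))
            - p * (p * a - (p - 1) * (a * t))) / (q * b - (q - 1) * (b * t)) := by
      rw [le_div_iff₀ hHq]
      nlinarith [key, hnn]
    refine h2.trans (le_of_eq ?_)
    rw [sub_div, mul_div_cancel_right₀ _ hHq.ne']
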